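/- Let n ≡ 1 (mod 4) be a positive integer and let a, b be indeterminates. Then, modulo b − q^n, one has Σ_{k=0}^{(n−1)/2} [6k+1] · (aq, q/a, q; q^2)_k·(q/b; q^4)_k · q^{k²+k}·b^k / ((aq^4, q^4/a, q^4; q^4)_k·(q^2 b; q^2)_k) ≡ [n] · (q, q^3; q^4)_{(n−1)/4} / (aq^4, q^4/a; q^4)_{(n−1)/4}. -/

import Mathlib

/-- The q-shifted factorial `(a; q)_k = (1-a)(1-aq)⋯(1-aq^{k-1})`. -/
noncomputable def qPoch {K : Type*} [Field K] (a q : K) (k : ℕ) : K :=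
  ∏ i ∈ Finset.range k, (1 - a * q ^ i)

/-- The q-integer `[m]_q = (1 - q^m)/(1 - q)`. -/
noncomputable def qInt {K : Type*} [Field K] (m : ℕ) (q : K) : K :=
  (1 - q ^ m) / (1 - q)

/-- `A ≡ B (mod P)`: written as a reduced fraction of polynomials, the numerator of
`A - B` is divisible by `P`. -/
def fracCongr {R K : Type*} [CommRing R] [Field K] [Algebra R K] (A B : K) (P : R) : Prop :=
  ∃ f g : R, IsRelPrime g P ∧ P ∣ f ∧
    A - B = algebraMap R K f / algebraMap R K g

/-- The field of rational functions in the three indeterminates `q, a, b`. -/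
noncomputable abbrev K3 : Type := FractionRing (MvPolynomial (Fin 3) ℚ)

noncomputable def q : K3 := algebraMap (MvPolynomial (Fin 3) ℚ) K3 (MvPolynomial.X 0)
noncomputable def a : K3 := algebraMap (MvPolynomial (Fin 3) ℚ) K3 (MvPolynomial.X 1)
noncomputable def b : K3 := algebraMap (MvPolynomial (Fin 3) ℚ) K3 (MvPolynomial.X 2)

/-- `Σ_{k=0}^{(n−1)/2} [6k+1]·(aq, q/a, q; q²)_k·(q/b; q⁴)_k·q^{k²+k}·b^k /
((aq⁴, q⁴/a, q⁴; q⁴)_k·(q²b; q²)_k)`. -/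
noncomputable def lhsSum (n : ℕ) : K3 :=
  ∑ k ∈ Finset.range ((n - 1) / 2 + 1),
    qInt (6 * k + 1) q *
      (qPoch (a * q) (q ^ 2) k * qPoch (q / a) (q ^ 2) k * qPoch q (q ^ 2) k *
        qPoch (q / b) (q ^ 4) k * q ^ (k ^ 2 + k) * b ^ k) /
      (qPoch (a * q ^ 4) (q ^ 4) k * qPoch (q ^ 4 / a) (q ^ 4) k *
        qPoch (q ^ 4) (q ^ 4) k * qPoch (q ^ 2 * b) (q ^ 2) k)
-- ===== auxiliary development =====
open MvPolynomial

abbrev R3 : Type := MvPolynomial (Fin 3) ℚ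

noncomputable def ι : R3 →+* K3 := algebraMap R3 K3

lemma ι_inj : Function.Injective ι := IsFractionRing.injective R3 K3

lemma ι_ne_zero {f : R3} (h : f ≠ 0) : ι f ≠ 0 := fun h0 => h (ι_inj (by rw [h0, map_zero]))

-- polynomial nonvanishing
lemma p1 (j : ℕ) (hj : j ≠ 0) : (1 - X 0 ^ j : R3) ≠ 0 := by
  intro h
  have h2 := congrArg (eval fun _ => (2 : ℚ)) h
  simp only [map_sub, map_one, map_pow, eval_X, map_zero] at h2
  have : (1:ℚ) < 2 ^ j := one_lt_pow₀ (by norm_num) hj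
  linarith

lemma p2 (j : ℕ) : (1 - X 1 * X 0 ^ j : R3) ≠ 0 := by
  intro h
  have h2 := congrArg (eval fun i : Fin 3 => if i = 0 then (1 : ℚ) else 2) h
  norm_num at h2

lemma p3 (j : ℕ) : (X 1 - X 0 ^ j : R3) ≠ 0 := by
  intro h
  have h2 := congrArg (eval fun i : Fin 3 => if i = 0 then (1 : ℚ) else 2) h
  norm_num at h2

lemma a_eq : a = ι (X 1) := rfl

lemma q_pow (j : ℕ) : q ^ j = ι (X 0 ^ j) := by rw [q, map_pow]; rfl

lemma hq0 : q ≠ 0 := by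
  rw [q]; exact ι_ne_zero (by exact fun h => by simpa using congrArg (eval fun _ => (2:ℚ)) h)

lemma ha0 : a ≠ 0 := by
  rw [a]; exact ι_ne_zero (by exact fun h => by simpa using congrArg (eval fun _ => (2:ℚ)) h)

lemma hqp (j : ℕ) : q ^ j ≠ 0 := pow_ne_zero _ hq0

lemma h1 (j : ℕ) (hj : j ≠ 0) : (1 : K3) - q ^ j ≠ 0 := by
  rw [q_pow]
  have : (1 : K3) = ι 1 := by rw [map_one]
  rw [this, ← map_sub]
  exact ι_ne_zero (p1 j hj)

lemma h2 (j : ℕ) : (1 : K3) - a * q ^ j ≠ 0 := by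
  rw [q_pow, a_eq]
  have : (1 : K3) = ι 1 := by rw [map_one]
  rw [this, ← map_mul, ← map_sub]
  exact ι_ne_zero (p2 j)

lemma h3 (j : ℕ) : a - q ^ j ≠ 0 := by
  rw [q_pow, a_eq, ← map_sub]
  exact ι_ne_zero (p3 j)

-- qPoch basics
lemma qPoch_zero (x y : K3) : qPoch x y 0 = 1 := Finset.prod_range_zero _

lemma qPoch_succ (x y : K3) (k : ℕ) : qPoch x y (k + 1) = qPoch x y k * (1 - x * y ^ k) :=
  Finset.prod_range_succ _ _

lemma qPoch_ne_zero {x y : K3} (h : ∀ i : ℕ, 1 - x * y ^ i ≠ 0) (k : ℕ) : qPoch x y k ≠ 0 :=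
  Finset.prod_ne_zero_iff.mpr fun i _ => h i

lemma hD1 (k : ℕ) : qPoch (a * q ^ 4) (q ^ 4) k ≠ 0 := by
  apply qPoch_ne_zero; intro i
  have e : a * q ^ 4 * (q ^ 4) ^ i = a * q ^ (4 + 4 * i) := by rw [← pow_mul, pow_add]; ring
  rw [e]; exact h2 _

lemma hD2 (k : ℕ) : qPoch (q ^ 4 / a) (q ^ 4) k ≠ 0 := by
  apply qPoch_ne_zero; intro i
  have e : 1 - q ^ 4 / a * (q ^ 4) ^ i = (a - q ^ (4 + 4 * i)) / a := by
    rw [sub_div, div_self ha0, ← pow_mul, pow_add]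
    ring
  rw [e]; exact div_ne_zero (h3 _) ha0

lemma hD3 (k : ℕ) : qPoch (q ^ 4) (q ^ 4) k ≠ 0 := by
  apply qPoch_ne_zero; intro i
  have e : q ^ 4 * (q ^ 4) ^ i = q ^ (4 + 4 * i) := by rw [← pow_mul, pow_add]
  rw [e]; exact h1 _ (by omega)

lemma hE (n k : ℕ) : qPoch (q ^ 2 * q ^ n) (q ^ 2) k ≠ 0 := by
  apply qPoch_ne_zero; intro i
  have e : q ^ 2 * q ^ n * (q ^ 2) ^ i = q ^ (n + 2 + 2 * i) := by rw [← pow_mul, pow_add, pow_add]; ring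
  rw [e]; exact h1 _ (by omega)

-- substitution ring hom
noncomputable def sb (n : ℕ) : R3 →+* R3 :=
  (aeval (fun i : Fin 3 => if i = 2 then (X 0 : R3) ^ n else X i)).toRingHom

lemma sb_X0 (n : ℕ) : sb n (X 0) = X 0 := by simp [sb]
lemma sb_X1 (n : ℕ) : sb n (X 1) = X 1 := by simp [sb]
lemma sb_X2 (n : ℕ) : sb n (X 2) = X 0 ^ n := by simp [sb]
lemma sb_C (n : ℕ) (r : ℚ) : sb n (C r) = C r := by
  simp [sb, algebraMap_eq]

lemma sb_P (n : ℕ) : sb n (X 2 - X 0 ^ n) = 0 := by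
  rw [map_sub, map_pow, sb_X0, sb_X2]; ring

lemma dvd_sub_sb (n : ℕ) (f : R3) : (X 2 - X 0 ^ n : R3) ∣ f - sb n f := by
  induction f using MvPolynomial.induction_on with
  | C r => rw [sb_C, sub_self]; exact dvd_zero _
  | add p r hp hr =>
      have e : p + r - sb n (p + r) = (p - sb n p) + (r - sb n r) := by rw [map_add]; ring
      rw [e]; exact dvd_add hp hr
  | mul_X p i hp =>
      have e : p * X i - sb n (p * X i) =
          (p - sb n p) * X i + sb n p * (X i - sb n (X i)) := by rw [map_mul]; ring
      rw [e]
      refine dvd_add (hp.mul_right _) ?_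
      fin_cases i <;> simp [sb]

lemma dvd_of_sb_zero {n : ℕ} {f : R3} (h : sb n f = 0) : (X 2 - X 0 ^ n : R3) ∣ f := by
  have := dvd_sub_sb n f
  rw [h, sub_zero] at this; exact this

lemma sb_zero_of_dvd {n : ℕ} {f : R3} (h : (X 2 - X 0 ^ n : R3) ∣ f) : sb n f = 0 := by
  obtain ⟨e, he⟩ := h
  rw [he, map_mul, sb_P, zero_mul]

lemma Pne (n : ℕ) : (X 2 - X 0 ^ n : R3) ≠ 0 := by
  intro h
  have h2 := congrArg (eval fun i : Fin 3 => if i = 0 then (1 : ℚ) else 2) h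
  rw [map_sub, map_pow, eval_X, eval_X, if_neg (by decide : ¬(2 : Fin 3) = 0),
    if_pos rfl, one_pow, map_zero] at h2
  norm_num at h2

lemma relprime (n : ℕ) {g : R3} (hg : sb n g ≠ 0) : IsRelPrime g (X 2 - X 0 ^ n) := by
  intro d hdg hdP
  obtain ⟨e, he⟩ := hdP
  have h0 : sb n d * sb n e = 0 := by rw [← map_mul, ← he, sb_P]
  rcases mul_eq_zero.mp h0 with hd | he'
  · exact absurd (sb_zero_of_dvd ((dvd_of_sb_zero hd).trans hdg)) hg
  · obtain ⟨w, hw⟩ := dvd_of_sb_zero he'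
    rw [hw] at he
    have hkey : (X 2 - X 0 ^ n : R3) * 1 = (X 2 - X 0 ^ n) * (w * d) := by
      calc (X 2 - X 0 ^ n : R3) * 1 = X 2 - X 0 ^ n := mul_one _
        _ = d * ((X 2 - X 0 ^ n) * w) := he
        _ = (X 2 - X 0 ^ n) * (w * d) := by ring
    have h1' : (1 : R3) = w * d := mul_left_cancel₀ (Pne n) hkey
    exact IsUnit.of_mul_eq_one (a := d) w (by rw [mul_comm]; exact h1'.symm)

-- the substitution relation on K3
def Sbr (n : ℕ) (x y : K3) : Prop :=
  ∃ f g : R3, sb n g ≠ 0 ∧ x * ι g = ι f ∧ ι (sb n f) = y * ι (sb n g)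

lemma sbr_poly (n : ℕ) (f : R3) : Sbr n (ι f) (ι (sb n f)) :=
  ⟨f, 1, by simp, by simp, by simp⟩

lemma sbr_q (n : ℕ) : Sbr n q q := by
  have := sbr_poly n (X 0); rw [sb_X0] at this; exact this

lemma sbr_a (n : ℕ) : Sbr n a a := by
  have := sbr_poly n (X 1); rw [sb_X1] at this; exact this

lemma sbr_b (n : ℕ) : Sbr n b (q ^ n) := by
  have := sbr_poly n (X 2); rw [sb_X2, ← q_pow] at this; exact this

lemma sbr_one (n : ℕ) : Sbr n 1 1 := by
  have := sbr_poly n 1; simpa using this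

lemma sbr_add {n : ℕ} {x y x' y' : K3} (h : Sbr n x y) (h' : Sbr n x' y') :
    Sbr n (x + x') (y + y') := by
  obtain ⟨f, g, hg, he, hv⟩ := h
  obtain ⟨f', g', hg', he', hv'⟩ := h'
  refine ⟨f * g' + f' * g, g * g', ?_, ?_, ?_⟩
  · rw [map_mul]; exact mul_ne_zero hg hg'
  · rw [map_add, map_mul, map_mul, map_mul, ← he, ← he']; ring
  · simp only [map_add, map_mul, hv, hv']; ring

lemma sbr_neg {n : ℕ} {x y : K3} (h : Sbr n x y) : Sbr n (-x) (-y) := by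
  obtain ⟨f, g, hg, he, hv⟩ := h
  exact ⟨-f, g, hg, by rw [map_neg, ← he]; ring, by rw [map_neg, map_neg, hv]; ring⟩

lemma sbr_sub {n : ℕ} {x y x' y' : K3} (h : Sbr n x y) (h' : Sbr n x' y') :
    Sbr n (x - x') (y - y') := by
  have := sbr_add h (sbr_neg h')
  simpa [sub_eq_add_neg] using this

lemma sbr_mul {n : ℕ} {x y x' y' : K3} (h : Sbr n x y) (h' : Sbr n x' y') :
    Sbr n (x * x') (y * y') := by
  obtain ⟨f, g, hg, he, hv⟩ := h
  obtain ⟨f', g', hg', he', hv'⟩ := h'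
  refine ⟨f * f', g * g', ?_, ?_, ?_⟩
  · rw [map_mul]; exact mul_ne_zero hg hg'
  · rw [map_mul, map_mul, ← he, ← he']; ring
  · simp only [map_mul, hv, hv']; ring

lemma sbr_div {n : ℕ} {x y x' y' : K3} (h : Sbr n x y) (h' : Sbr n x' y') (hy' : y' ≠ 0) :
    Sbr n (x / x') (y / y') := by
  obtain ⟨f, g, hg, he, hv⟩ := h
  obtain ⟨f', g', hg', he', hv'⟩ := h'
  have hsgf' : ι (sb n f') ≠ 0 := by
    rw [hv']; exact mul_ne_zero hy' (ι_ne_zero hg')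
  have hsf' : sb n f' ≠ 0 := fun h0 => hsgf' (by rw [h0, map_zero])
  have hf'0 : (f' : R3) ≠ 0 := fun h0 => hsf' (by rw [h0, map_zero])
  have hif' : ι f' ≠ 0 := ι_ne_zero hf'0
  have hig' : ι g' ≠ 0 := ι_ne_zero fun h0 => hg' (by rw [h0, map_zero])
  have hx' : x' ≠ 0 := by
    intro h0; rw [h0, zero_mul] at he'; exact hif' he'.symm
  refine ⟨f * g', g * f', ?_, ?_, ?_⟩
  · rw [map_mul]; exact mul_ne_zero hg hsf'
  · rw [map_mul, map_mul]
    field_simp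
    rw [← he, ← he']; ring
  · rw [map_mul, map_mul, map_mul, map_mul, hv, hv']
    field_simp

lemma sbr_pow {n : ℕ} {x y : K3} (h : Sbr n x y) (k : ℕ) : Sbr n (x ^ k) (y ^ k) := by
  induction k with
  | zero => simpa using sbr_one n
  | succ k ih => rw [pow_succ, pow_succ]; exact sbr_mul ih h

lemma sbr_sum {n : ℕ} {ι' : Type*} {s : Finset ι'} {f g : ι' → K3}
    (h : ∀ i ∈ s, Sbr n (f i) (g i)) :
    Sbr n (∑ i ∈ s, f i) (∑ i ∈ s, g i) := by
  classical
  induction s using Finset.induction_on with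
  | empty => simpa using sbr_sub (sbr_one n) (sbr_one n)
  | insert _ _ hni ih =>
      rw [Finset.sum_insert hni, Finset.sum_insert hni]
      exact sbr_add (h _ (Finset.mem_insert_self _ _))
        (ih fun i hi => h i (Finset.mem_insert_of_mem hi))

lemma sbr_prod {n : ℕ} {ι' : Type*} {s : Finset ι'} {f g : ι' → K3}
    (h : ∀ i ∈ s, Sbr n (f i) (g i)) :
    Sbr n (∏ i ∈ s, f i) (∏ i ∈ s, g i) := by
  classical
  induction s using Finset.induction_on with
  | empty => simpa using sbr_one n
  | insert _ _ hni ih =>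
      rw [Finset.prod_insert hni, Finset.prod_insert hni]
      exact sbr_mul (h _ (Finset.mem_insert_self _ _))
        (ih fun i hi => h i (Finset.mem_insert_of_mem hi))

lemma sbr_qPoch {n : ℕ} {x y x' y' : K3} (h : Sbr n x y) (h' : Sbr n x' y') (k : ℕ) :
    Sbr n (qPoch x x' k) (qPoch y y' k) := by
  unfold qPoch
  exact sbr_prod fun i _ => sbr_sub (sbr_one n) (sbr_mul h (sbr_pow h' i))

lemma sbr_qInt (n m : ℕ) : Sbr n (qInt m q) (qInt m q) := by
  unfold qInt
  exact sbr_div (sbr_sub (sbr_one n) (sbr_pow (sbr_q n) m))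
    (sbr_sub (sbr_one n) (sbr_q n)) (by simpa using h1 1 one_ne_zero)

lemma fracCongr_of_sbr {n : ℕ} {A B : K3} (h : Sbr n (A - B) 0) :
    fracCongr A B (X 2 - X 0 ^ n : R3) := by
  obtain ⟨f, g, hg, he, hv⟩ := h
  have hg0 : (g : R3) ≠ 0 := fun h0 => hg (by rw [h0, map_zero])
  have hig : ι g ≠ 0 := ι_ne_zero hg0
  refine ⟨f, g, relprime n hg, ?_, ?_⟩
  · apply dvd_of_sb_zero
    rw [zero_mul] at hv
    exact ι_inj (by rw [hv, map_zero])
  · show A - B = ι f / ι g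
    rw [eq_div_iff hig]; exact he

-- ===== the substituted summand and identity =====

noncomputable def Fs (n k : ℕ) : K3 :=
  qInt (6 * k + 1) q *
      (qPoch (a * q) (q ^ 2) k * qPoch (q / a) (q ^ 2) k * qPoch q (q ^ 2) k *
        qPoch (q / q ^ n) (q ^ 4) k * q ^ (k ^ 2 + k) * (q ^ n) ^ k) /
    (qPoch (a * q ^ 4) (q ^ 4) k * qPoch (q ^ 4 / a) (q ^ 4) k *
      qPoch (q ^ 4) (q ^ 4) k * qPoch (q ^ 2 * q ^ n) (q ^ 2) k)

noncomputable def RhsM (m : ℕ) : K3 :=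
  qInt (4 * m + 1) q * (qPoch q (q ^ 4) m * qPoch (q ^ 3) (q ^ 4) m) /
    (qPoch (a * q ^ 4) (q ^ 4) m * qPoch (q ^ 4 / a) (q ^ 4) m)

lemma Fs_vanish (m k : ℕ) (hk : m < k) : Fs (4 * m + 1) k = 0 := by
  have hz : qPoch (q / q ^ (4 * m + 1)) (q ^ 4) k = 0 := by
    unfold qPoch
    apply Finset.prod_eq_zero (Finset.mem_range.mpr hk)
    have e : q / q ^ (4 * m + 1) * (q ^ 4) ^ m = q ^ (4 * m + 1) / q ^ (4 * m + 1) := by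
      rw [← pow_mul]; ring
    rw [e, div_self (hqp _), sub_self]
  unfold Fs
  rw [hz]
  ring

lemma P1 (m k : ℕ) :
    qPoch (q / q ^ (4 * m + 1)) (q ^ 4) k * (q ^ (4 * m + 4) - 1) =
      (q ^ (4 * m + 4) - q ^ (4 * k)) * qPoch (q / q ^ (4 * m + 5)) (q ^ 4) k := by
  induction k with
  | zero => simp [qPoch_zero]
  | succ k ih =>
      rw [qPoch_succ, qPoch_succ]
      have e1 : (1 : K3) - q / q ^ (4 * m + 1) * (q ^ 4) ^ k =
          (q ^ (4 * m + 1) - q ^ (4 * k + 1)) / q ^ (4 * m + 1) := by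
        rw [← pow_mul, sub_div, div_self (hqp _)]
        ring
      have e2 : (1 : K3) - q / q ^ (4 * m + 5) * (q ^ 4) ^ k =
          (q ^ (4 * m + 5) - q ^ (4 * k + 1)) / q ^ (4 * m + 5) := by
        rw [← pow_mul, sub_div, div_self (hqp _)]
        ring
      rw [e1, e2]
      have l : qPoch (q / q ^ (4 * m + 1)) (q ^ 4) k *
          ((q ^ (4 * m + 1) - q ^ (4 * k + 1)) / q ^ (4 * m + 1)) * (q ^ (4 * m + 4) - 1) =
          (qPoch (q / q ^ (4 * m + 1)) (q ^ 4) k * (q ^ (4 * m + 1) - q ^ (4 * k + 1)) *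
            (q ^ (4 * m + 4) - 1)) / q ^ (4 * m + 1) := by ring
      have r : (q ^ (4 * m + 4) - q ^ (4 * (k + 1))) *
          (qPoch (q / q ^ (4 * m + 5)) (q ^ 4) k *
            ((q ^ (4 * m + 5) - q ^ (4 * k + 1)) / q ^ (4 * m + 5))) =
          ((q ^ (4 * m + 4) - q ^ (4 * (k + 1))) * qPoch (q / q ^ (4 * m + 5)) (q ^ 4) k *
            (q ^ (4 * m + 5) - q ^ (4 * k + 1))) / q ^ (4 * m + 5) := by ring
      rw [l, r, div_eq_div_iff (hqp _) (hqp _)]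
      linear_combination ((q ^ (4 * m + 1) - q ^ (4 * k + 1)) * q ^ (4 * m + 5)) * ih

lemma P2 (m k : ℕ) :
    qPoch (q ^ 2 * q ^ (4 * m + 5)) (q ^ 2) k * ((1 - q ^ (4 * m + 3)) * (1 - q ^ (4 * m + 5))) =
      qPoch (q ^ 2 * q ^ (4 * m + 1)) (q ^ 2) k *
        ((1 - q ^ (4 * m + 3 + 2 * k)) * (1 - q ^ (4 * m + 5 + 2 * k))) := by
  induction k with
  | zero => simp [qPoch_zero]
  | succ k ih =>
      rw [qPoch_succ, qPoch_succ]
      linear_combination (1 - q ^ 2 * q ^ (4 * m + 5) * (q ^ 2) ^ k) * ih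

noncomputable def u0e (m k : ℕ) : K3 :=
  (q ^ (4 * m + 4) - q ^ (4 * k)) * (1 - q ^ (4 * m + 3 + 2 * k)) * (1 - q ^ (4 * m + 5 + 2 * k)) /
    ((q ^ (4 * m + 4) - 1) * q ^ (4 * k) * (1 - q ^ (4 * m + 3)) * (1 - q ^ (4 * m + 5)))

noncomputable def ve (n k : ℕ) : K3 :=
  (1 - q ^ (6 * k + 7)) * (1 - a * q ^ (2 * k + 1)) * (a - q ^ (2 * k + 1)) * (1 - q ^ (2 * k + 1)) *
      (q ^ n - q ^ (4 * k + 1)) * q ^ (2 * k + 2) /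
    ((1 - q ^ (6 * k + 1)) * (1 - a * q ^ (4 * k + 4)) * (a - q ^ (4 * k + 4)) *
      (1 - q ^ (4 * k + 4)) * (1 - q ^ (n + 2 + 2 * k)))

noncomputable def tm (m : ℕ) : K3 :=
  (1 - q ^ (4 * m + 5)) * (1 - q ^ (4 * m + 3)) * a /
    ((1 - a * q ^ (4 * m + 4)) * (a - q ^ (4 * m + 4)))

noncomputable def cert (m k : ℕ) : K3 :=
  -(q ^ (4 * m + 4) * (1 - q ^ (4 * k)) * (1 - a * q ^ (4 * k)) * (a - q ^ (4 * k)) *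
      (1 - q ^ (4 * m + 5 + 2 * k))) /
    ((1 - q ^ (4 * m + 4)) * (1 - a * q ^ (4 * m + 4)) * (a - q ^ (4 * m + 4)) * q ^ (4 * k) *
      (1 - q ^ (6 * k + 1)))

lemma hZm (m : ℕ) : (q ^ (4 * m + 4) - 1 : K3) ≠ 0 := by
  rw [show (q ^ (4 * m + 4) - 1 : K3) = -(1 - q ^ (4 * m + 4)) from by ring]
  exact neg_ne_zero.mpr (h1 _ (by omega))

set_option maxHeartbeats 2000000 in
lemma R1 (m k : ℕ) : Fs (4 * m + 1) k = u0e m k * Fs (4 * m + 5) k := by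
  have f1 : qPoch (q / q ^ (4 * m + 1)) (q ^ 4) k =
      (q ^ (4 * m + 4) - q ^ (4 * k)) * qPoch (q / q ^ (4 * m + 5)) (q ^ 4) k /
        (q ^ (4 * m + 4) - 1) := by
    rw [eq_div_iff (hZm m)]; exact P1 m k
  have f2 : qPoch (q ^ 2 * q ^ (4 * m + 1)) (q ^ 2) k =
      qPoch (q ^ 2 * q ^ (4 * m + 5)) (q ^ 2) k *
        ((1 - q ^ (4 * m + 3)) * (1 - q ^ (4 * m + 5))) /
        ((1 - q ^ (4 * m + 3 + 2 * k)) * (1 - q ^ (4 * m + 5 + 2 * k))) := by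
    rw [eq_div_iff (mul_ne_zero (h1 _ (by omega)) (h1 _ (by omega)))]
    exact (P2 m k).symm
  have f3 : ((q ^ (4 * m + 1) : K3)) ^ k = (q ^ (4 * m + 5)) ^ k / q ^ (4 * k) := by
    rw [eq_div_iff (hqp _), ← pow_mul, ← pow_mul, ← pow_add]
    congr 1; ring
  unfold Fs u0e
  rw [f1, f2, f3]
  have n1 := h1 (4 * m + 3 + 2 * k) (by omega)
  have n2 := h1 (4 * m + 5 + 2 * k) (by omega)
  have n3 := h1 (4 * m + 3) (by omega)
  have n4 := h1 (4 * m + 5) (by omega)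
  have d1 := hD1 k
  have d2 := hD2 k
  have d3 := hD3 k
  have d4 := hE (4 * m + 5) k
  have z1 := hZm m
  have z2 := hqp (4 * k)
  have h1q : (1 : K3) - q ≠ 0 := by simpa using h1 1 one_ne_zero
  generalize qInt (6 * k + 1) q = Q
  generalize qPoch (a * q) (q ^ 2) k = A1
  generalize qPoch (q / a) (q ^ 2) k = A2
  generalize qPoch q (q ^ 2) k = A3
  generalize qPoch (q / q ^ (4 * m + 5)) (q ^ 4) k = A4 at *
  generalize qPoch (a * q ^ 4) (q ^ 4) k = D1 at *
  generalize qPoch (q ^ 4 / a) (q ^ 4) k = D2 at *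
  generalize qPoch (q ^ 4) (q ^ 4) k = D3 at *
  generalize qPoch (q ^ 2 * q ^ (4 * m + 5)) (q ^ 2) k = D4 at *
  generalize (q ^ (4 * m + 5)) ^ k = Y at *
  generalize q ^ (k ^ 2 + k) = T at *
  generalize q ^ (4 * k) = W at *
  generalize q ^ (4 * m + 4) = Z at *
  generalize (1 : K3) - q ^ (4 * m + 3 + 2 * k) = B1 at *
  generalize (1 : K3) - q ^ (4 * m + 5 + 2 * k) = B2 at *
  generalize (1 : K3) - q ^ (4 * m + 3) = B3 at *
  generalize (1 : K3) - q ^ (4 * m + 5) = B4 at *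
  field_simp

set_option maxHeartbeats 2000000 in
lemma R2 (n k : ℕ) : Fs n (k + 1) = ve n k * Fs n k := by
  have h1q : (1 : K3) - q ≠ 0 := by simpa using h1 1 one_ne_zero
  have g1 : (1 : K3) - q / a * (q ^ 2) ^ k = (a - q ^ (2 * k + 1)) / a := by
    rw [sub_div, div_self ha0]
    congr 1
    rw [← pow_mul]; ring
  have g2 : (1 : K3) - q / q ^ n * (q ^ 4) ^ k = (q ^ n - q ^ (4 * k + 1)) / q ^ n := by
    rw [sub_div, div_self (hqp n)]
    congr 1
    rw [← pow_mul]; ring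
  have g3 : (1 : K3) - q ^ 4 / a * (q ^ 4) ^ k = (a - q ^ (4 * k + 4)) / a := by
    rw [sub_div, div_self ha0]
    congr 1
    rw [← pow_mul]; ring
  have g4 : (1 : K3) - a * q * (q ^ 2) ^ k = 1 - a * q ^ (2 * k + 1) := by
    rw [← pow_mul]; ring
  have g5 : (1 : K3) - q * (q ^ 2) ^ k = 1 - q ^ (2 * k + 1) := by
    rw [← pow_mul]; ring
  have g6 : (1 : K3) - a * q ^ 4 * (q ^ 4) ^ k = 1 - a * q ^ (4 * k + 4) := by
    rw [← pow_mul]; ring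
  have g7 : (1 : K3) - q ^ 4 * (q ^ 4) ^ k = 1 - q ^ (4 * k + 4) := by
    rw [← pow_mul]; ring
  have g8 : (1 : K3) - q ^ 2 * q ^ n * (q ^ 2) ^ k = 1 - q ^ (n + 2 + 2 * k) := by
    rw [← pow_mul, ← pow_add, ← pow_add]; ring
  have e1 : 6 * (k + 1) + 1 = 6 * k + 7 := by ring
  have e2 : (k + 1) ^ 2 + (k + 1) = (k ^ 2 + k) + (2 * k + 2) := by ring
  unfold Fs ve
  rw [e1, e2, qPoch_succ, qPoch_succ, qPoch_succ, qPoch_succ, qPoch_succ, qPoch_succ,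
    qPoch_succ, qPoch_succ, pow_add q (k ^ 2 + k) (2 * k + 2), pow_succ ((q : K3) ^ n) k,
    g1, g2, g3, g4, g5, g6, g7, g8]
  unfold qInt
  have n1 := h1 (6 * k + 1) (by omega)
  have n2 := h1 (n + 2 + 2 * k) (by omega)
  have n3 := h2 (4 * k + 4)
  have n4 := h3 (4 * k + 4)
  have n5 := h1 (4 * k + 4) (by omega)
  have d1 := hD1 k
  have d2 := hD2 k
  have d3 := hD3 k
  have d4 := hE n k
  generalize hy : (q ^ n : K3) = y at *
  generalize hb1 : (1 - q ^ (6 * k + 7) : K3) = b1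
  generalize hb2 : (1 - q : K3) = b2 at h1q
  generalize hb3 : (1 - a * q ^ (2 * k + 1) : K3) = b3
  generalize hb4 : (a - q ^ (2 * k + 1) : K3) = b4
  generalize hb5 : (1 - q ^ (2 * k + 1) : K3) = b5
  generalize hb6 : (y - q ^ (4 * k + 1) : K3) = b6
  generalize hb7 : (1 - a * q ^ (4 * k + 4) : K3) = b7 at n3
  generalize hb8 : (a - q ^ (4 * k + 4) : K3) = b8 at n4
  generalize hb9 : (1 - q ^ (4 * k + 4) : K3) = b9 at n5
  generalize hb10 : (1 - q ^ (n + 2 + 2 * k) : K3) = b10 at n2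
  generalize hb11 : (1 - q ^ (6 * k + 1) : K3) = b11 at n1
  generalize hP1 : (qPoch (a * q) (q ^ 2) k : K3) = P1'
  generalize hP2 : (qPoch (q / a) (q ^ 2) k : K3) = P2'
  generalize hP3 : (qPoch q (q ^ 2) k : K3) = P3'
  generalize hP4 : (qPoch (q / y) (q ^ 4) k : K3) = P4'
  generalize hP5 : (qPoch (a * q ^ 4) (q ^ 4) k : K3) = P5' at d1
  generalize hP6 : (qPoch (q ^ 4 / a) (q ^ 4) k : K3) = P6' at d2
  generalize hP7 : (qPoch (q ^ 4) (q ^ 4) k : K3) = P7' at d3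
  generalize hP8 : (qPoch (q ^ 2 * y) (q ^ 2) k : K3) = P8' at d4
  have hy0 : y ≠ 0 := by rw [← hy]; exact hqp n
  have hd1 : (y * a * b2 * P5' * b7 * P6' * b8 * P7' * b9 * P8' * b10 : K3) ≠ 0 := by
    repeat' apply mul_ne_zero
    all_goals first | assumption | exact ha0
  have hd2 : (b2 * P5' * b7 * P6' * b8 * P7' * b9 * P8' * b10 * b11 : K3) ≠ 0 := by
    repeat' apply mul_ne_zero
    all_goals first | assumption | exact ha0
  simp only [div_eq_mul_inv, mul_inv_rev, inv_inv]
  trans (b1 * b3 * b4 * b5 * b6 * P1' * P2' * P3' * P4' * q ^ (k ^ 2 + 3 * k + 2) * y ^ (k + 1) * a /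
      (y * a * b2 * P5' * b7 * P6' * b8 * P7' * b9 * P8' * b10))
  · ring
  trans (b1 * b3 * b4 * b5 * b6 * P1' * P2' * P3' * P4' * q ^ (k ^ 2 + 3 * k + 2) * y ^ k * b11 /
      (b2 * P5' * b7 * P6' * b8 * P7' * b9 * P8' * b10 * b11))
  · rw [div_eq_div_iff hd1 hd2]
    ring
  · ring

lemma TU (m k : ℕ) :
    tm m * u0e m k =
      (q ^ (4 * m + 4) - q ^ (4 * k)) * (1 - q ^ (4 * m + 3 + 2 * k)) *
          (1 - q ^ (4 * m + 5 + 2 * k)) * a /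
        ((q ^ (4 * m + 4) - 1) * q ^ (4 * k) * (1 - a * q ^ (4 * m + 4)) *
          (a - q ^ (4 * m + 4))) := by
  unfold tm u0e
  rw [div_mul_div_comm]
  rw [div_eq_div_iff
    (by
      repeat' apply mul_ne_zero
      · exact h2 (4 * m + 4)
      · exact h3 (4 * m + 4)
      · exact hZm m
      · exact hqp _
      · exact h1 _ (by omega)
      · exact h1 _ (by omega))
    (by
      repeat' apply mul_ne_zero
      · exact hZm m
      · exact hqp _
      · exact h2 (4 * m + 4)
      · exact h3 (4 * m + 4))]
  ring

lemma CV (m k : ℕ) :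
    cert m (k + 1) * ve (4 * m + 5) k =
      -((q ^ (4 * m + 4) - q ^ (4 * k)) * (1 - a * q ^ (2 * k + 1)) * (a - q ^ (2 * k + 1)) *
          (1 - q ^ (2 * k + 1)) * q ^ (4 * m + 4)) /
        ((1 - q ^ (4 * m + 4)) * (1 - a * q ^ (4 * m + 4)) * (a - q ^ (4 * m + 4)) *
          q ^ (2 * k + 1) * (1 - q ^ (6 * k + 1))) := by
  unfold cert ve
  rw [div_mul_div_comm]
  rw [div_eq_div_iff
    (by
      repeat' apply mul_ne_zero
      · exact h1 _ (by omega)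
      · exact h2 (4 * m + 4)
      · exact h3 (4 * m + 4)
      · exact hqp _
      · exact hq0
      · exact hq0
      · exact hq0
      · exact hq0
      · exact h1 (6 * (k + 1) + 1) (by omega)
      · exact h1 (6 * k + 1) (by omega)
      · exact h2 (4 * k + 4)
      · exact h3 (4 * k + 4)
      · exact h1 (4 * k + 4) (by omega)
      · exact h1 (4 * m + 5 + 2 + 2 * k) (by omega))
    (by
      repeat' apply mul_ne_zero
      · exact h1 _ (by omega)
      · exact h2 (4 * m + 4)
      · exact h3 (4 * m + 4)
      · exact hqp _
      · exact hq0
      · exact h1 (6 * k + 1) (by omega))]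
  ring

lemma combo (A B C D E F : K3) (hB : B ≠ 0) (hD : D ≠ 0) (hF : F ≠ 0)
    (h : (B * D + A * D - C * B) * F = E * (B * D)) : 1 + A / B - C / D = E / F := by
  field_simp
  linear_combination h

set_option maxHeartbeats 4000000 in
lemma key (m k : ℕ) :
    (1 : K3) + cert m k - tm m * u0e m k = cert m (k + 1) * ve (4 * m + 5) k := by
  rw [TU, CV]
  unfold cert
  apply combo
  · repeat' apply mul_ne_zero
    · exact h1 _ (by omega)
    · exact h2 (4 * m + 4)
    · exact h3 (4 * m + 4)
    · exact hqp _
    · exact h1 (6 * k + 1) (by omega)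
  · repeat' apply mul_ne_zero
    · exact hZm m
    · exact hqp _
    · exact h2 (4 * m + 4)
    · exact h3 (4 * m + 4)
  · repeat' apply mul_ne_zero
    · exact h1 _ (by omega)
    · exact h2 (4 * m + 4)
    · exact h3 (4 * m + 4)
    · exact hqp _
    · exact hq0
    · exact h1 (6 * k + 1) (by omega)
  · ring

lemma telescope (m k : ℕ) :
    Fs (4 * m + 5) k - tm m * Fs (4 * m + 1) k =
      cert m (k + 1) * Fs (4 * m + 5) (k + 1) - cert m k * Fs (4 * m + 5) k := by
  rw [R1 m k, R2 (4 * m + 5) k]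
  linear_combination (Fs (4 * m + 5) k) * key m k

lemma cert_zero (m : ℕ) : cert m 0 = 0 := by
  unfold cert
  norm_num

lemma rhs_step (m : ℕ) : tm m * RhsM m = RhsM (m + 1) := by
  unfold tm RhsM qInt
  rw [qPoch_succ, qPoch_succ, qPoch_succ, qPoch_succ]
  have h1q : (1 : K3) - q ≠ 0 := by simpa using h1 1 one_ne_zero
  have g3 : (1 : K3) - q ^ 4 / a * (q ^ 4) ^ m = (a - q ^ (4 * m + 4)) / a := by
    rw [sub_div, div_self ha0]
    congr 1
    rw [← pow_mul]; ring
  have g6 : (1 : K3) - a * q ^ 4 * (q ^ 4) ^ m = 1 - a * q ^ (4 * m + 4) := by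
    rw [← pow_mul]; ring
  have gq : (1 : K3) - q * (q ^ 4) ^ m = 1 - q ^ (4 * m + 1) := by
    rw [← pow_mul]; ring
  have gq3 : (1 : K3) - q ^ 3 * (q ^ 4) ^ m = 1 - q ^ (4 * m + 3) := by
    rw [← pow_mul]; ring
  rw [g3, g6, gq, gq3, show 4 * (m + 1) + 1 = 4 * m + 5 from by ring]
  have n1 := h2 (4 * m + 4)
  have n2 := h3 (4 * m + 4)
  have d1 := hD1 m
  have d2 := hD2 m
  field_simp

lemma sumFs (m : ℕ) : ∑ k ∈ Finset.range (m + 1), Fs (4 * m + 1) k = RhsM m := by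
  induction m with
  | zero =>
      rw [Finset.sum_range_one]
      unfold Fs RhsM
      norm_num [qPoch_zero]
  | succ m ih =>
      have tel : ∀ k ∈ Finset.range (m + 2),
          Fs (4 * m + 5) k - tm m * Fs (4 * m + 1) k =
            cert m (k + 1) * Fs (4 * m + 5) (k + 1) - cert m k * Fs (4 * m + 5) k :=
        fun k _ => telescope m k
      have hsum := Finset.sum_congr rfl tel
      have hvan : Fs (4 * m + 5) (m + 2) = 0 := by
        rw [show 4 * m + 5 = 4 * (m + 1) + 1 from by ring]
        exact Fs_vanish (m + 1) (m + 2) (by omega)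
      have hlast : Fs (4 * m + 1) (m + 1) = 0 := Fs_vanish m (m + 1) (by omega)
      rw [Finset.sum_sub_distrib, ← Finset.mul_sum,
        Finset.sum_range_sub (fun k => cert m k * Fs (4 * m + 5) k),
        Finset.sum_range_succ (fun k => Fs (4 * m + 1) k), hlast, add_zero, ih,
        hvan, cert_zero, mul_zero, zero_mul, sub_zero] at hsum
      rw [show 4 * (m + 1) + 1 = 4 * m + 5 from by ring]
      show ∑ k ∈ Finset.range (m + 2), Fs (4 * m + 5) k = RhsM (m + 1)
      rw [← rhs_step m]
      linear_combination hsum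

lemma mainId (m : ℕ) : ∑ k ∈ Finset.range (2 * m + 1), Fs (4 * m + 1) k = RhsM m := by
  have hsub : Finset.range (m + 1) ⊆ Finset.range (2 * m + 1) :=
    Finset.range_subset_range.mpr (by omega)
  have hz : ∀ x ∈ Finset.range (2 * m + 1), x ∉ Finset.range (m + 1) → Fs (4 * m + 1) x = 0 := by
    intro x _ hx
    exact Fs_vanish m x (by simpa using hx)
  rw [← Finset.sum_subset hsub hz]
  exact sumFs m

theorem stmt12 (n : ℕ) (hn : 0 < n) (hmod : n % 4 = 1) :
    fracCongr
      (lhsSum n)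
      (qInt n q *
        (qPoch q (q ^ 4) ((n - 1) / 4) * qPoch (q ^ 3) (q ^ 4) ((n - 1) / 4)) /
        (qPoch (a * q ^ 4) (q ^ 4) ((n - 1) / 4) * qPoch (q ^ 4 / a) (q ^ 4) ((n - 1) / 4)))
      ((MvPolynomial.X 2 - MvPolynomial.X 0 ^ n : MvPolynomial (Fin 3) ℚ)) := by
  obtain ⟨m, rfl⟩ : ∃ m, n = 4 * m + 1 := ⟨n / 4, by omega⟩
  rw [show (4 * m + 1 - 1) / 4 = m from by omega]
  set nn := 4 * m + 1 with hnn
  have hA : Sbr nn (lhsSum nn) (∑ k ∈ Finset.range (2 * m + 1), Fs nn k) := by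
    unfold lhsSum Fs
    rw [show (nn - 1) / 2 = 2 * m from by omega]
    apply sbr_sum
    intro k _
    apply sbr_div
    · exact sbr_mul (sbr_qInt _ _)
        (sbr_mul
          (sbr_mul
            (sbr_mul
              (sbr_mul
                (sbr_mul
                  (sbr_qPoch (sbr_mul (sbr_a _) (sbr_q _)) (sbr_pow (sbr_q _) 2) k)
                  (sbr_qPoch (sbr_div (sbr_q _) (sbr_a _) ha0) (sbr_pow (sbr_q _) 2) k))
                (sbr_qPoch (sbr_q _) (sbr_pow (sbr_q _) 2) k))
              (sbr_qPoch (sbr_div (sbr_q _) (sbr_b _) (hqp _)) (sbr_pow (sbr_q _) 4) k))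
            (sbr_pow (sbr_q _) (k ^ 2 + k)))
          (sbr_pow (sbr_b _) k))
    · exact sbr_mul
        (sbr_mul
          (sbr_mul
            (sbr_qPoch (sbr_mul (sbr_a _) (sbr_pow (sbr_q _) 4)) (sbr_pow (sbr_q _) 4) k)
            (sbr_qPoch (sbr_div (sbr_pow (sbr_q _) 4) (sbr_a _) ha0) (sbr_pow (sbr_q _) 4) k))
          (sbr_qPoch (sbr_pow (sbr_q _) 4) (sbr_pow (sbr_q _) 4) k))
        (sbr_qPoch (sbr_mul (sbr_pow (sbr_q _) 2) (sbr_b _)) (sbr_pow (sbr_q _) 2) k)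
    · exact mul_ne_zero (mul_ne_zero (mul_ne_zero (hD1 k) (hD2 k)) (hD3 k)) (hE _ k)
  have hB : Sbr nn
      (qInt nn q * (qPoch q (q ^ 4) m * qPoch (q ^ 3) (q ^ 4) m) /
        (qPoch (a * q ^ 4) (q ^ 4) m * qPoch (q ^ 4 / a) (q ^ 4) m))
      (qInt nn q * (qPoch q (q ^ 4) m * qPoch (q ^ 3) (q ^ 4) m) /
        (qPoch (a * q ^ 4) (q ^ 4) m * qPoch (q ^ 4 / a) (q ^ 4) m)) := by
    apply sbr_div
    · exact sbr_mul (sbr_qInt _ _)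
        (sbr_mul (sbr_qPoch (sbr_q _) (sbr_pow (sbr_q _) 4) m)
          (sbr_qPoch (sbr_pow (sbr_q _) 3) (sbr_pow (sbr_q _) 4) m))
    · exact sbr_mul
        (sbr_qPoch (sbr_mul (sbr_a _) (sbr_pow (sbr_q _) 4)) (sbr_pow (sbr_q _) 4) m)
        (sbr_qPoch (sbr_div (sbr_pow (sbr_q _) 4) (sbr_a _) ha0) (sbr_pow (sbr_q _) 4) m)
    · exact mul_ne_zero (hD1 m) (hD2 m)
  have hAB := sbr_sub hA hB
  have h0 : (∑ k ∈ Finset.range (2 * m + 1), Fs nn k) -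
      (qInt nn q * (qPoch q (q ^ 4) m * qPoch (q ^ 3) (q ^ 4) m) /
        (qPoch (a * q ^ 4) (q ^ 4) m * qPoch (q ^ 4 / a) (q ^ 4) m)) = 0 := by
    rw [hnn, mainId m]
    unfold RhsM
    rw [sub_self]
  rw [h0] at hAB
  exact fracCongr_of_sbr hAB
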